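/- There is no 4-tuple of strictly positive integers (a_1,a_2,a_3,a_4) with M_4(a_1,a_2,a_3,a_4) = T; moreover, for a 4-tuple of strictly positive integers, M_4(a_1,a_2,a_3,a_4) = −T holds if and only if (a_1,a_2,a_3,a_4) = (1,2,1,3) or (a_1,a_2,a_3,a_4) = (2,1,2,2). -/

import Mathlib

/-- The elementary matrix `[[a, -1], [1, 0]]`. -/
def genMat (a : ℤ) : Matrix (Fin 2) (Fin 2) ℤ := !![a, -1; 1, 0]

/-- `Mprod [a₁, …, aₙ] = [[aₙ,-1],[1,0]] ⋯ [[a₁,-1],[1,0]]`. -/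
def Mprod (l : List ℤ) : Matrix (Fin 2) (Fin 2) ℤ := ((l.map genMat).reverse).prod

lemma mprod4 (a₁ a₂ a₃ a₄ : ℤ) :
    Mprod [a₁, a₂, a₃, a₄] =
      !![(a₂*(a₄*a₃-1)-a₄)*a₁-(a₄*a₃-1), -(a₂*(a₄*a₃-1)-a₄);
         (a₂*a₃-1)*a₁-a₃, -(a₂*a₃-1)] := by
  simp [Mprod, genMat, Matrix.mul_fin_two]
  ring_nf
  simp only [and_self]

/-- `M₄ = T` has no positive solution, and `M₄ = -T` has exactly the positive
solutions `(1,2,1,3)` and `(2,1,2,2)`. -/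
theorem stmt16 (a₁ a₂ a₃ a₄ : ℤ)
    (h₁ : 0 < a₁) (h₂ : 0 < a₂) (h₃ : 0 < a₃) (h₄ : 0 < a₄) :
    Mprod [a₁, a₂, a₃, a₄] ≠ !![1, 1; 0, 1] ∧
    (Mprod [a₁, a₂, a₃, a₄] = -!![1, 1; 0, 1] ↔
      ((a₁, a₂, a₃, a₄) = (1, 2, 1, 3) ∨ (a₁, a₂, a₃, a₄) = (2, 1, 2, 2))) := by
  rw [mprod4]
  constructor
  · intro h
    have h11 : -(a₂*a₃-1) = 1 := congrFun (congrFun h 1) 1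
    nlinarith
  · constructor
    · intro h
      have e00 : (a₂*(a₄*a₃-1)-a₄)*a₁-(a₄*a₃-1) = -1 := congrFun (congrFun h 0) 0
      have e01 : -(a₂*(a₄*a₃-1)-a₄) = -1 := congrFun (congrFun h 0) 1
      have e10 : (a₂*a₃-1)*a₁-a₃ = 0 := congrFun (congrFun h 1) 0
      have e11 : -(a₂*a₃-1) = -1 := congrFun (congrFun h 1) 1
      have hbc : a₂ * a₃ = 2 := by linarith
      have hb2 : a₂ ≤ 2 := by nlinarith
      have hc2 : a₃ ≤ 2 := by nlinarith
      interval_cases a₂ <;> interval_cases a₃ <;> simp_all <;> omega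
    · rintro (h | h) <;>
      · simp only [Prod.mk.injEq] at h
        obtain ⟨r1, r2, r3, r4⟩ := h
        subst r1; subst r2; subst r3; subst r4
        norm_num
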